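/- Let β > 0, N, p ≥ 1 with Np ≥ 2, μ̄ ∈ ℝ^{N×p}, and let g : ℝ → ℝ be three times continuously differentiable with bounded first, second and third derivatives; define m(X) := g(G_β(X + μ̄)). For each triple (k,j) = ((k₁,j₁),(k₂,j₂),(k₃,j₃)) ∈ ([N]×[p])³ and x ∈ ℝ^{N×p}, set U_{(k,j)}(x) := sup{ |∂³m/∂X_{k₁j₁}∂X_{k₂j₂}∂X_{k₃j₃}(x + y)| : y ∈ ℝ^{N×p}, max_{m∈[N],ℓ∈[p]} |y_{mℓ}| ≤ β^{-1} }. Then for every x ∈ ℝ^{N×p}: Σ over all triples (k,j) ∈ ([N]×[p])³ of U_{(k,j)}(x) ≤ e^{12} · (‖g'''‖_∞ + 16β‖g''‖_∞ + 24β²‖g'‖_∞). -/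

import Mathlib

/-- The soft-max functional `F_β(v) = β⁻¹ log (Σ_j exp (β v_j))`. -/
noncomputable def softMax (β : ℝ) {m : ℕ} (v : Fin m → ℝ) : ℝ :=
  β⁻¹ * Real.log (∑ j, Real.exp (β * v j))

/-- The smooth MinMax approximation `G_β(W) = -F_β(-F_β(W))`, where the inner `F_β` is
applied to every row of `W`. -/
noncomputable def smoothMinMax (β : ℝ) {N p : ℕ} (W : Fin N → Fin p → ℝ) : ℝ :=
  - softMax β fun k => - softMax β (W k)

/-- The composition `m(X) = g(G_β(X + μ̄))` viewed as a function of the vectorized matrix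
`X : (Fin N × Fin p) → ℝ`. -/
noncomputable def mComp (β : ℝ) {N p : ℕ} (μb : Fin N × Fin p → ℝ) (g : ℝ → ℝ)
    (X : Fin N × Fin p → ℝ) : ℝ :=
  g (smoothMinMax β fun k j => X (k, j) + μb (k, j))

open Real Finset

set_option linter.unusedSectionVars false
set_option linter.unreachableTactic false
set_option linter.unusedTactic false
set_option maxHeartbeats 1000000

namespace MD

variable {N p : ℕ}

abbrev Idx (N p : ℕ) := Fin N × Fin p

noncomputable def pj (a : Idx N p) : ((Idx N p) → ℝ) →L[ℝ] ℝ :=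
  ContinuousLinearMap.proj a

variable (β : ℝ)

noncomputable def S (k : Fin N) (Y : Idx N p → ℝ) : ℝ := ∑ j, Real.exp (β * Y (k, j))
noncomputable def F (k : Fin N) (Y : Idx N p → ℝ) : ℝ := β⁻¹ * Real.log (S β k Y)
noncomputable def T (Y : Idx N p → ℝ) : ℝ := ∑ k, Real.exp (β * -(F β k Y))
noncomputable def G (Y : Idx N p → ℝ) : ℝ := -(β⁻¹ * Real.log (T β Y))
noncomputable def w (a : Idx N p) (Y : Idx N p → ℝ) : ℝ := Real.exp (β * Y a) * (S β a.1 Y)⁻¹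
noncomputable def pr (k : Fin N) (Y : Idx N p → ℝ) : ℝ := Real.exp (β * -(F β k Y)) * (T β Y)⁻¹
noncomputable def P (a : Idx N p) (Y : Idx N p → ℝ) : ℝ := pr β a.1 Y * w β a Y

lemma mComp_eq (μb : Idx N p → ℝ) (g : ℝ → ℝ) :
    mComp β μb g = fun z => g (G β (z + μb)) := rfl

def dI (a b : Idx N p) : ℝ := if a = b then 1 else 0
def dR (a b : Idx N p) : ℝ := if a.1 = b.1 then 1 else 0
def dK (k : Fin N) (b : Idx N p) : ℝ := if k = b.1 then 1 else 0

noncomputable def wd (a b : Idx N p) (Y : Idx N p → ℝ) : ℝ :=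
  β * (dI a b * w β a Y - dR a b * (w β a Y * w β b Y))
noncomputable def prd (k : Fin N) (b : Idx N p) (Y : Idx N p → ℝ) : ℝ :=
  β * (pr β k Y * P β b Y - dK k b * (pr β k Y * w β b Y))
noncomputable def Q (a b : Idx N p) (Y : Idx N p → ℝ) : ℝ :=
  β * (dI a b * P β a Y - 2 * (dR a b * (P β a Y * w β b Y)) + P β a Y * P β b Y)
noncomputable def Qd (c b a : Idx N p) (Y : Idx N p → ℝ) : ℝ :=
  β * (dI c b * Q β c a Y
      - 2 * (dR c b * (Q β c a Y * w β b Y + P β c Y * wd β b a Y))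
      + (Q β c a Y * P β b Y + P β c Y * Q β b a Y))

/- derivative continuous linear maps -/
noncomputable def DS (k : Fin N) (Y : Idx N p → ℝ) : ((Idx N p) → ℝ) →L[ℝ] ℝ :=
  ∑ j, Real.exp (β * Y (k, j)) • (β • pj (k, j))
noncomputable def DF (k : Fin N) (Y : Idx N p → ℝ) : ((Idx N p) → ℝ) →L[ℝ] ℝ :=
  β⁻¹ • ((S β k Y)⁻¹ • DS β k Y)
noncomputable def DT (Y : Idx N p → ℝ) : ((Idx N p) → ℝ) →L[ℝ] ℝ :=
  ∑ k, Real.exp (β * -(F β k Y)) • (β • -(DF β k Y))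
noncomputable def DG (Y : Idx N p → ℝ) : ((Idx N p) → ℝ) →L[ℝ] ℝ :=
  -(β⁻¹ • ((T β Y)⁻¹ • DT β Y))
noncomputable def DW (a : Idx N p) (Y : Idx N p → ℝ) : ((Idx N p) → ℝ) →L[ℝ] ℝ :=
  Real.exp (β * Y a) • ((-(S β a.1 Y ^ 2)⁻¹) • DS β a.1 Y)
    + (S β a.1 Y)⁻¹ • (Real.exp (β * Y a) • (β • pj a))
noncomputable def DPr (k : Fin N) (Y : Idx N p → ℝ) : ((Idx N p) → ℝ) →L[ℝ] ℝ :=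
  Real.exp (β * -(F β k Y)) • ((-(T β Y ^ 2)⁻¹) • DT β Y)
    + (T β Y)⁻¹ • (Real.exp (β * -(F β k Y)) • (β • -(DF β k Y)))
noncomputable def DP (a : Idx N p) (Y : Idx N p → ℝ) : ((Idx N p) → ℝ) →L[ℝ] ℝ :=
  pr β a.1 Y • DW β a Y + w β a Y • DPr β a.1 Y
noncomputable def DQ (c b : Idx N p) (Y : Idx N p → ℝ) : ((Idx N p) → ℝ) →L[ℝ] ℝ :=
  β • ((dI c b • DP β c Y
        - (2:ℝ) • (dR c b • (P β c Y • DW β b Y + w β b Y • DP β c Y)))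
      + (P β c Y • DP β b Y + P β b Y • DP β c Y))

section pos
variable [NeZero N] [NeZero p]

lemma S_pos (k : Fin N) (Y : Idx N p → ℝ) : 0 < S β k Y := by
  haveI : Nonempty (Fin p) := ⟨⟨0, Nat.pos_of_ne_zero (NeZero.ne p)⟩⟩
  exact Finset.sum_pos (fun j _ => Real.exp_pos _) Finset.univ_nonempty

lemma T_pos (Y : Idx N p → ℝ) : 0 < T β Y := by
  haveI : Nonempty (Fin N) := ⟨⟨0, Nat.pos_of_ne_zero (NeZero.ne N)⟩⟩
  exact Finset.sum_pos (fun j _ => Real.exp_pos _) Finset.univ_nonempty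

lemma w_pos (a : Idx N p) (Y : Idx N p → ℝ) : 0 < w β a Y :=
  mul_pos (Real.exp_pos _) (inv_pos.2 (S_pos β a.1 Y))

lemma pr_pos (k : Fin N) (Y : Idx N p → ℝ) : 0 < pr β k Y :=
  mul_pos (Real.exp_pos _) (inv_pos.2 (T_pos β Y))

lemma P_pos (a : Idx N p) (Y : Idx N p → ℝ) : 0 < P β a Y :=
  mul_pos (pr_pos β a.1 Y) (w_pos β a Y)

lemma sum_w_row (k : Fin N) (Y : Idx N p → ℝ) : ∑ j, w β (k, j) Y = 1 := by
  simp only [w]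
  rw [← Finset.sum_mul]
  exact mul_inv_cancel₀ (S_pos β k Y).ne'

lemma sum_pr (Y : Idx N p → ℝ) : ∑ k, pr β k Y = 1 := by
  simp only [pr]
  rw [← Finset.sum_mul]
  exact mul_inv_cancel₀ (T_pos β Y).ne'

lemma sum_P_row (k : Fin N) (Y : Idx N p → ℝ) : ∑ j, P β (k, j) Y = pr β k Y := by
  simp only [P]
  rw [← Finset.mul_sum, sum_w_row, mul_one]

lemma sum_P (Y : Idx N p → ℝ) : ∑ a : Idx N p, P β a Y = 1 := by
  rw [Fintype.sum_prod_type]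
  simp only [sum_P_row]
  exact sum_pr β Y

/- HasFDerivAt lemmas -/
lemma hasFDerivAt_coord (a : Idx N p) (Y : Idx N p → ℝ) :
    HasFDerivAt (fun Y : Idx N p → ℝ => Y a) (pj a) Y :=
  (ContinuousLinearMap.proj a : ((Idx N p) → ℝ) →L[ℝ] ℝ).hasFDerivAt

lemma hasFDerivAt_S (k : Fin N) (Y : Idx N p → ℝ) :
    HasFDerivAt (S β k) (DS β k Y) Y :=
  HasFDerivAt.fun_sum fun j _ => ((hasFDerivAt_coord (k, j) Y).const_mul β).exp

lemma hasFDerivAt_F (k : Fin N) (Y : Idx N p → ℝ) :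
    HasFDerivAt (F β k) (DF β k Y) Y :=
  ((hasFDerivAt_S β k Y).log (S_pos β k Y).ne').const_mul β⁻¹

lemma hasFDerivAt_T (Y : Idx N p → ℝ) :
    HasFDerivAt (T β) (DT β Y) Y :=
  HasFDerivAt.fun_sum fun k _ => (((hasFDerivAt_F β k Y).neg).const_mul β).exp

lemma hasFDerivAt_G (Y : Idx N p → ℝ) :
    HasFDerivAt (G β) (DG β Y) Y :=
  (((hasFDerivAt_T β Y).log (T_pos β Y).ne').const_mul β⁻¹).neg

lemma hasFDerivAt_w (a : Idx N p) (Y : Idx N p → ℝ) :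
    HasFDerivAt (w β a) (DW β a Y) Y :=
  HasFDerivAt.mul ((hasFDerivAt_coord a Y).const_mul β).exp
    ((hasDerivAt_inv (S_pos β a.1 Y).ne').comp_hasFDerivAt Y (hasFDerivAt_S β a.1 Y))

lemma hasFDerivAt_pr (k : Fin N) (Y : Idx N p → ℝ) :
    HasFDerivAt (pr β k) (DPr β k Y) Y :=
  HasFDerivAt.mul (((hasFDerivAt_F β k Y).neg.const_mul β).exp)
    ((hasDerivAt_inv (T_pos β Y).ne').comp_hasFDerivAt Y (hasFDerivAt_T β Y))

lemma hasFDerivAt_P (a : Idx N p) (Y : Idx N p → ℝ) :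
    HasFDerivAt (P β a) (DP β a Y) Y :=
  HasFDerivAt.mul (hasFDerivAt_pr β a.1 Y) (hasFDerivAt_w β a Y)

lemma hasFDerivAt_Q (c b : Idx N p) (Y : Idx N p → ℝ) :
    HasFDerivAt (Q β c b) (DQ β c b Y) Y :=
  ((((hasFDerivAt_P β c Y).const_mul (dI c b)).sub
      ((((hasFDerivAt_P β c Y).mul (hasFDerivAt_w β b Y)).const_mul (dR c b)).const_mul 2)).add
    ((hasFDerivAt_P β c Y).mul (hasFDerivAt_P β b Y))).const_mul β

end pos

end MD

namespace MD
section eval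
variable {N p : ℕ} (β : ℝ) [NeZero N] [NeZero p]

lemma sum_pair {M : Type*} [AddCommMonoid M] (b : Idx N p) (k : Fin N) (f : Fin p → M) :
    (∑ j, if (k, j) = b then f j else 0) = if k = b.1 then f b.2 else 0 := by
  rcases b with ⟨l, i⟩
  rcases eq_or_ne k l with rfl | h
  · simp [Prod.ext_iff]
  · simp [Prod.ext_iff, h]

lemma pj_single (a b : Idx N p) : pj a (Pi.single b (1:ℝ)) = dI a b := by
  simp [pj, dI, Pi.single_apply]

lemma evDS (k : Fin N) (Y : Idx N p → ℝ) (b : Idx N p) :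
    DS β k Y (Pi.single b 1) = dK k b * (β * Real.exp (β * Y b)) := by
  simp only [DS, ContinuousLinearMap.sum_apply, ContinuousLinearMap.smul_apply,
    pj_single, dI, dK, smul_eq_mul]
  rw [show (∑ j, Real.exp (β * Y (k, j)) * (β * if (k, j) = b then 1 else 0))
      = ∑ j, if (k, j) = b then Real.exp (β * Y (k, j)) * β else 0 by
    refine Finset.sum_congr rfl fun j _ => ?_
    split_ifs <;> ring]
  rw [sum_pair]
  rcases b with ⟨l, i⟩
  rcases eq_or_ne k l with rfl | h
  · simp [mul_comm]
  · simp [h]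

lemma evDF (hβ : β ≠ 0) (k : Fin N) (Y : Idx N p → ℝ) (b : Idx N p) :
    DF β k Y (Pi.single b 1) = dK k b * w β b Y := by
  simp only [DF, ContinuousLinearMap.smul_apply, evDS, smul_eq_mul, dK, w]
  rcases b with ⟨l, i⟩
  rcases eq_or_ne k l with rfl | h
  · simp only [if_pos rfl, one_mul]
    field_simp
  · simp [h]

lemma evDT (hβ : β ≠ 0) (Y : Idx N p → ℝ) (b : Idx N p) :
    DT β Y (Pi.single b 1) = -(β * (Real.exp (β * -(F β b.1 Y)) * w β b Y)) := by
  simp only [DT, ContinuousLinearMap.sum_apply, ContinuousLinearMap.smul_apply,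
    ContinuousLinearMap.neg_apply, evDF β hβ, smul_eq_mul, dK]
  rw [show (∑ k, Real.exp (β * -(F β k Y)) * (β * -((if k = b.1 then 1 else 0) * w β b Y)))
      = ∑ k, if k = b.1 then -(β * (Real.exp (β * -(F β k Y)) * w β b Y)) else 0 by
    refine Finset.sum_congr rfl fun k _ => ?_
    split_ifs <;> ring]
  simp

lemma evDG (hβ : β ≠ 0) (Y : Idx N p → ℝ) (b : Idx N p) :
    DG β Y (Pi.single b 1) = P β b Y := by
  simp only [DG, ContinuousLinearMap.neg_apply, ContinuousLinearMap.smul_apply,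
    evDT β hβ, smul_eq_mul, P, pr]
  have hT := (T_pos β Y).ne'
  field_simp

lemma evDW (a : Idx N p) (Y : Idx N p → ℝ) (b : Idx N p) :
    DW β a Y (Pi.single b 1) = wd β a b Y := by
  have hS : (S β a.1 Y) ≠ 0 := (S_pos β a.1 Y).ne'
  have hSb : (S β b.1 Y) ≠ 0 := (S_pos β b.1 Y).ne'
  simp only [DW, ContinuousLinearMap.add_apply, ContinuousLinearMap.smul_apply,
    evDS, pj_single, smul_eq_mul, wd, dI, dK, dR, w]
  rcases eq_or_ne a.1 b.1 with h | h
  · rcases eq_or_ne a b with rfl | h2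
    · simp only [if_pos rfl]
      rw [← h] at hSb ⊢
      field_simp
      ring
    · simp only [if_pos h, if_neg h2]
      rw [← h] at hSb ⊢
      field_simp
      ring
  · have h2 : a ≠ b := fun hh => h (by rw [hh])
    simp only [if_neg h, if_neg h2, if_neg (fun hh => h (by rw [hh]) : ¬ a.1 = b.1)]
    ring

lemma evDPr (hβ : β ≠ 0) (k : Fin N) (Y : Idx N p → ℝ) (b : Idx N p) :
    DPr β k Y (Pi.single b 1) = prd β k b Y := by
  have hT : (T β Y) ≠ 0 := (T_pos β Y).ne'
  simp only [DPr, ContinuousLinearMap.add_apply, ContinuousLinearMap.smul_apply,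
    ContinuousLinearMap.neg_apply, evDT β hβ, evDF β hβ, smul_eq_mul, prd, pr, P, dK]
  rcases eq_or_ne k b.1 with h | h
  · simp only [if_pos h]
    field_simp
    ring
  · simp only [if_neg h]
    field_simp
    ring

lemma evDP (hβ : β ≠ 0) (a : Idx N p) (Y : Idx N p → ℝ) (b : Idx N p) :
    DP β a Y (Pi.single b 1) = Q β a b Y := by
  simp only [DP, ContinuousLinearMap.add_apply, ContinuousLinearMap.smul_apply,
    evDW, evDPr β hβ, smul_eq_mul, Q, wd, prd, P, dI, dR, dK]
  ring

lemma evDQ (hβ : β ≠ 0) (c b : Idx N p) (Y : Idx N p → ℝ) (a : Idx N p) :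
    DQ β c b Y (Pi.single a 1) = Qd β c b a Y := by
  simp only [DQ, ContinuousLinearMap.add_apply, ContinuousLinearMap.sub_apply,
    ContinuousLinearMap.smul_apply, evDW, evDP β hβ, smul_eq_mul, Qd]
  ring

end eval
end MD

namespace MD
section level
variable {N p : ℕ} [NeZero N] [NeZero p]
variable (β : ℝ) (μb : Idx N p → ℝ) (g : ℝ → ℝ)

noncomputable def m1 (c : Idx N p) (z : Idx N p → ℝ) : ℝ :=
  deriv g (G β (z + μb)) * P β c (z + μb)

noncomputable def m2 (c b : Idx N p) (z : Idx N p → ℝ) : ℝ :=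
  deriv g (G β (z + μb)) * Q β c b (z + μb)
    + P β c (z + μb) * (deriv (deriv g) (G β (z + μb)) * P β b (z + μb))

noncomputable def m3 (c b a : Idx N p) (z : Idx N p → ℝ) : ℝ :=
  deriv g (G β (z + μb)) * Qd β c b a (z + μb)
    + deriv (deriv g) (G β (z + μb)) *
        (Q β c b (z + μb) * P β a (z + μb) + P β c (z + μb) * Q β b a (z + μb)
          + P β b (z + μb) * Q β c a (z + μb))
    + deriv (deriv (deriv g)) (G β (z + μb)) *
        (P β a (z + μb) * (P β b (z + μb) * P β c (z + μb)))

variable (hg : ContDiff ℝ 3 g)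
include hg

lemma hg_diff : Differentiable ℝ g := hg.differentiable (by norm_num)

lemma hdg2 : ContDiff ℝ 2 (deriv g) := by
  have h : (3 : WithTop ℕ∞) = 2 + 1 := by norm_num
  rw [h] at hg
  exact (contDiff_succ_iff_deriv.mp hg).2.2

lemma hdg_diff : Differentiable ℝ (deriv g) := (hdg2 g hg).differentiable (by norm_num)

lemma hddg1 : ContDiff ℝ 1 (deriv (deriv g)) := by
  have h2 := hdg2 g hg
  have h : (2 : WithTop ℕ∞) = 1 + 1 := by norm_num
  rw [h] at h2
  exact (contDiff_succ_iff_deriv.mp h2).2.2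

lemma hddg_diff : Differentiable ℝ (deriv (deriv g)) :=
  (hddg1 g hg).differentiable (by norm_num)

omit hg

lemma hshift (z : Idx N p → ℝ) :
    HasFDerivAt (fun z : Idx N p → ℝ => z + μb) (ContinuousLinearMap.id ℝ _) z :=
  (hasFDerivAt_id z).add_const μb

include hg

lemma hasFDerivAt_m (z : Idx N p → ℝ) :
    HasFDerivAt (mComp β μb g)
      (deriv g (G β (z + μb)) •
        ((DG β (z + μb)).comp (ContinuousLinearMap.id ℝ _))) z := by
  rw [mComp_eq]
  exact ((hg_diff g hg) _).hasDerivAt.comp_hasFDerivAt z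
    ((hasFDerivAt_G β _).comp z (hshift μb z))

lemma fderiv_m (hβ : β ≠ 0) (z : Idx N p → ℝ) (c : Idx N p) :
    fderiv ℝ (mComp β μb g) z (Pi.single c 1) = m1 β μb g c z := by
  rw [(hasFDerivAt_m β μb g hg z).fderiv]
  simp [m1, evDG β hβ]

lemma hasFDerivAt_m1 (c : Idx N p) (z : Idx N p → ℝ) :
    HasFDerivAt (m1 β μb g c)
      (deriv g (G β (z + μb)) • ((DP β c (z + μb)).comp (ContinuousLinearMap.id ℝ _))
        + P β c (z + μb) • (deriv (deriv g) (G β (z + μb)) •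
            ((DG β (z + μb)).comp (ContinuousLinearMap.id ℝ _)))) z :=
  HasFDerivAt.mul
    (((hdg_diff g hg) _).hasDerivAt.comp_hasFDerivAt z
      ((hasFDerivAt_G β _).comp z (hshift μb z)))
    ((hasFDerivAt_P β c _).comp z (hshift μb z))

lemma fderiv_m1 (hβ : β ≠ 0) (c : Idx N p) (z : Idx N p → ℝ) (b : Idx N p) :
    fderiv ℝ (m1 β μb g c) z (Pi.single b 1) = m2 β μb g c b z := by
  rw [(hasFDerivAt_m1 β μb g hg c z).fderiv]
  simp [m2, evDG β hβ, evDP β hβ]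

lemma hasFDerivAt_m2 (c b : Idx N p) (z : Idx N p → ℝ) :
    HasFDerivAt (m2 β μb g c b)
      ((deriv g (G β (z + μb)) • ((DQ β c b (z + μb)).comp (ContinuousLinearMap.id ℝ _))
          + Q β c b (z + μb) • (deriv (deriv g) (G β (z + μb)) •
              ((DG β (z + μb)).comp (ContinuousLinearMap.id ℝ _))))
        + (P β c (z + μb) •
            (deriv (deriv g) (G β (z + μb)) •
                ((DP β b (z + μb)).comp (ContinuousLinearMap.id ℝ _))
              + P β b (z + μb) • (deriv (deriv (deriv g)) (G β (z + μb)) •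
                  ((DG β (z + μb)).comp (ContinuousLinearMap.id ℝ _))))
          + (deriv (deriv g) (G β (z + μb)) * P β b (z + μb)) •
              ((DP β c (z + μb)).comp (ContinuousLinearMap.id ℝ _)))) z :=
  HasFDerivAt.add
    (HasFDerivAt.mul
      (((hdg_diff g hg) _).hasDerivAt.comp_hasFDerivAt z
        ((hasFDerivAt_G β _).comp z (hshift μb z)))
      ((hasFDerivAt_Q β c b _).comp z (hshift μb z)))
    (HasFDerivAt.mul
      ((hasFDerivAt_P β c _).comp z (hshift μb z))
      (HasFDerivAt.mul
        (((hddg_diff g hg) _).hasDerivAt.comp_hasFDerivAt z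
          ((hasFDerivAt_G β _).comp z (hshift μb z)))
        ((hasFDerivAt_P β b _).comp z (hshift μb z))))

lemma fderiv_m2 (hβ : β ≠ 0) (c b : Idx N p) (z : Idx N p → ℝ) (a : Idx N p) :
    fderiv ℝ (m2 β μb g c b) z (Pi.single a 1) = m3 β μb g c b a z := by
  rw [(hasFDerivAt_m2 β μb g hg c b z).fderiv]
  simp only [ContinuousLinearMap.add_apply, ContinuousLinearMap.smul_apply,
    ContinuousLinearMap.comp_apply, ContinuousLinearMap.coe_id', id_eq,
    evDG β hβ, evDP β hβ, evDQ β hβ, smul_eq_mul, m3]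
  ring

omit hg

lemma contDiff_G : ContDiff ℝ 3 (G β (N := N) (p := p)) := by
  have hSC : ∀ k : Fin N, ContDiff ℝ 3 (S β (p := p) k) := fun k =>
    ContDiff.sum fun j _ =>
      Real.contDiff_exp.comp (contDiff_const.mul (pj (N := N) (p := p) (k, j)).contDiff)
  have hFC : ∀ k : Fin N, ContDiff ℝ 3 (F β (p := p) k) := fun k =>
    contDiff_const.mul ((hSC k).log fun Y => (S_pos β k Y).ne')
  have hTC : ContDiff ℝ 3 (T β (N := N) (p := p)) :=
    ContDiff.sum fun k _ => Real.contDiff_exp.comp (contDiff_const.mul (hFC k).neg)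
  exact (contDiff_const.mul (hTC.log fun Y => (T_pos β Y).ne')).neg

include hg

lemma contDiff_m : ContDiff ℝ 3 (mComp β μb g) := by
  rw [mComp_eq]
  exact hg.comp ((contDiff_G β).comp (contDiff_id.add contDiff_const))

end level
end MD

namespace MD
section red
variable {N p : ℕ} [NeZero N] [NeZero p]

lemma snoc3 (u1 u2 v : Idx N p → ℝ) : ![u1, u2, v] = Fin.snoc ![u1, u2] v := by
  funext i
  fin_cases i <;> simp [Fin.snoc] <;> rfl

lemma snoc2 (u1 v : Idx N p → ℝ) : ![u1, v] = Fin.snoc ![u1] v := by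
  funext i
  fin_cases i <;> simp [Fin.snoc] <;> rfl

lemma red2 (f : (Idx N p → ℝ) → ℝ) (hf : ContDiff ℝ 3 f) (v z u1 u2 : Idx N p → ℝ) :
    iteratedFDeriv ℝ 3 f z ![u1, u2, v]
      = iteratedFDeriv ℝ 2 (fun y => fderiv ℝ f y v) z ![u1, u2] := by
  rw [snoc3]
  have hd : ContDiff ℝ 2 (fderiv ℝ f) := hf.fderiv_right (m := 2) (by norm_num)
  have h := iteratedFDeriv_succ_apply_right (𝕜 := ℝ) (f := f) (x := z) (n := 2)
      (Fin.snoc ![u1, u2] v)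
  simp only [Fin.init_snoc, Fin.snoc_last] at h
  refine h.trans ?_
  rw [show (fun y => fderiv ℝ f y v) = (ContinuousLinearMap.apply ℝ ℝ v) ∘ (fderiv ℝ f)
      from rfl,
    ContinuousLinearMap.iteratedFDeriv_comp_left _ (hd.contDiffAt (x := z)) (by exact_mod_cast le_rfl)]
  rfl

lemma red1 (f : (Idx N p → ℝ) → ℝ) (hf : ContDiff ℝ 2 f) (v z u1 : Idx N p → ℝ) :
    iteratedFDeriv ℝ 2 f z ![u1, v]
      = iteratedFDeriv ℝ 1 (fun y => fderiv ℝ f y v) z ![u1] := by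
  rw [snoc2]
  have hd : ContDiff ℝ 1 (fderiv ℝ f) := hf.fderiv_right (m := 1) (by norm_num)
  have h := iteratedFDeriv_succ_apply_right (𝕜 := ℝ) (f := f) (x := z) (n := 1)
      (Fin.snoc ![u1] v)
  simp only [Fin.init_snoc, Fin.snoc_last] at h
  refine h.trans ?_
  rw [show (fun y => fderiv ℝ f y v) = (ContinuousLinearMap.apply ℝ ℝ v) ∘ (fderiv ℝ f)
      from rfl,
    ContinuousLinearMap.iteratedFDeriv_comp_left _ (hd.contDiffAt (x := z)) (by exact_mod_cast le_rfl)]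
  rfl

variable (β : ℝ) (μb : Idx N p → ℝ) (g : ℝ → ℝ)

lemma iter3_eq (hβ : β ≠ 0) (hg : ContDiff ℝ 3 g) (z : Idx N p → ℝ) (a b c : Idx N p) :
    iteratedFDeriv ℝ 3 (mComp β μb g) z ![Pi.single a 1, Pi.single b 1, Pi.single c 1]
      = m3 β μb g c b a z := by
  have hmC := contDiff_m β μb g hg
  rw [red2 _ hmC]
  have e1 : (fun y => fderiv ℝ (mComp β μb g) y (Pi.single c 1)) = m1 β μb g c :=
    funext fun y => fderiv_m β μb g hg hβ y c
  have hm1C : ContDiff ℝ 2 (m1 β μb g c) := by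
    rw [← e1]
    exact (ContinuousLinearMap.apply ℝ ℝ (Pi.single c 1)).contDiff.comp
      (hmC.fderiv_right (m := 2) (by norm_num))
  rw [e1, red1 _ hm1C]
  have e2 : (fun y => fderiv ℝ (m1 β μb g c) y (Pi.single b 1)) = m2 β μb g c b :=
    funext fun y => fderiv_m1 β μb g hg hβ c y b
  rw [e2, iteratedFDeriv_one_apply]
  simp only [Matrix.cons_val_zero]
  exact fderiv_m2 β μb g hg hβ c b z a

end red
end MD

namespace MD
section bounds
variable {N p : ℕ} [NeZero N] [NeZero p]
variable (β : ℝ)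

noncomputable def Qb (c b : Idx N p) (Y : Idx N p → ℝ) : ℝ :=
  β * (dI c b * P β c Y + 2 * (dR c b * (P β c Y * w β b Y)) + P β c Y * P β b Y)
noncomputable def wb (b a : Idx N p) (Y : Idx N p → ℝ) : ℝ :=
  β * (dI b a * w β b Y + dR b a * (w β b Y * w β a Y))
noncomputable def Qdb (c b a : Idx N p) (Y : Idx N p → ℝ) : ℝ :=
  β * (dI c b * Qb β c a Y
      + 2 * (dR c b * (Qb β c a Y * w β b Y + P β c Y * wb β b a Y))
      + (Qb β c a Y * P β b Y + P β c Y * Qb β b a Y))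

lemma dI_nonneg (a b : Idx N p) : 0 ≤ dI a b := by unfold dI; split_ifs <;> norm_num
lemma dR_nonneg (a b : Idx N p) : 0 ≤ dR a b := by unfold dR; split_ifs <;> norm_num

lemma w_nonneg (a : Idx N p) (Y : Idx N p → ℝ) : 0 ≤ w β a Y := (w_pos β a Y).le
lemma P_nonneg (a : Idx N p) (Y : Idx N p → ℝ) : 0 ≤ P β a Y := (P_pos β a Y).le

variable (hβ : 0 ≤ β)
include hβ

lemma Qb_nonneg (c b : Idx N p) (Y : Idx N p → ℝ) : 0 ≤ Qb β c b Y :=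
  mul_nonneg hβ (add_nonneg
    (add_nonneg (mul_nonneg (dI_nonneg c b) (P_nonneg β c Y))
      (mul_nonneg (by norm_num) (mul_nonneg (dR_nonneg c b)
        (mul_nonneg (P_nonneg β c Y) (w_nonneg β b Y)))))
    (mul_nonneg (P_nonneg β c Y) (P_nonneg β b Y)))

lemma wb_nonneg (b a : Idx N p) (Y : Idx N p → ℝ) : 0 ≤ wb β b a Y :=
  mul_nonneg hβ (add_nonneg (mul_nonneg (dI_nonneg b a) (w_nonneg β b Y))
    (mul_nonneg (dR_nonneg b a) (mul_nonneg (w_nonneg β b Y) (w_nonneg β a Y))))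

lemma Qdb_nonneg (c b a : Idx N p) (Y : Idx N p → ℝ) : 0 ≤ Qdb β c b a Y :=
  mul_nonneg hβ (add_nonneg
    (add_nonneg (mul_nonneg (dI_nonneg c b) (Qb_nonneg β hβ c a Y))
      (mul_nonneg (by norm_num) (mul_nonneg (dR_nonneg c b)
        (add_nonneg (mul_nonneg (Qb_nonneg β hβ c a Y) (w_nonneg β b Y))
          (mul_nonneg (P_nonneg β c Y) (wb_nonneg β hβ b a Y))))))
    (add_nonneg (mul_nonneg (Qb_nonneg β hβ c a Y) (P_nonneg β b Y))
      (mul_nonneg (P_nonneg β c Y) (Qb_nonneg β hβ b a Y))))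

omit hβ

lemma abs_comb (γ u v x1 x2 x3 y1 y2 y3 : ℝ) (hγ : 0 ≤ γ) (hu : 0 ≤ u) (hv : 0 ≤ v)
    (h1 : |x1| ≤ y1) (h2 : |x2| ≤ y2) (h3 : |x3| ≤ y3) :
    |γ * (u * x1 - 2 * (v * x2) + x3)| ≤ γ * (u * y1 + 2 * (v * y2) + y3) := by
  rw [abs_mul, abs_of_nonneg hγ]
  refine mul_le_mul_of_nonneg_left ?_ hγ
  calc |u * x1 - 2 * (v * x2) + x3| ≤ |u * x1 - 2 * (v * x2)| + |x3| := abs_add_le _ _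
    _ ≤ |u * x1| + |2 * (v * x2)| + |x3| := by
        have := abs_sub (u * x1) (2 * (v * x2))
        linarith [abs_sub_abs_le_abs_sub (u*x1) (2*(v*x2))]
    _ ≤ u * y1 + 2 * (v * y2) + y3 := by
        have e1 : |u * x1| = u * |x1| := by rw [abs_mul, abs_of_nonneg hu]
        have e2 : |2 * (v * x2)| = 2 * (v * |x2|) := by
          rw [abs_mul, abs_mul, abs_of_nonneg hv]; norm_num
        rw [e1, e2]
        have : u * |x1| ≤ u * y1 := mul_le_mul_of_nonneg_left h1 hu
        have : v * |x2| ≤ v * y2 := mul_le_mul_of_nonneg_left h2 hv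
        linarith [mul_le_mul_of_nonneg_left h1 hu, mul_le_mul_of_nonneg_left h2 hv]

include hβ

lemma abs_Q_le (c b : Idx N p) (Y : Idx N p → ℝ) : |Q β c b Y| ≤ Qb β c b Y := by
  unfold Q Qb
  exact abs_comb β _ _ _ _ _ _ _ _ hβ (dI_nonneg c b) (dR_nonneg c b)
    (le_of_eq (abs_of_nonneg (P_nonneg β c Y)))
    (le_of_eq (abs_of_nonneg (mul_nonneg (P_nonneg β c Y) (w_nonneg β b Y))))
    (le_of_eq (abs_of_nonneg (mul_nonneg (P_nonneg β c Y) (P_nonneg β b Y))))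

lemma abs_wd_le (b a : Idx N p) (Y : Idx N p → ℝ) : |wd β b a Y| ≤ wb β b a Y := by
  unfold wd wb
  have h : |β * (dI b a * w β b Y - dR b a * (w β b Y * w β a Y))|
      = β * |dI b a * w β b Y - dR b a * (w β b Y * w β a Y)| := by
    rw [abs_mul, abs_of_nonneg hβ]
  rw [h]
  refine mul_le_mul_of_nonneg_left ?_ hβ
  have e1 : |dI b a * w β b Y| = dI b a * w β b Y :=
    abs_of_nonneg (mul_nonneg (dI_nonneg b a) (w_nonneg β b Y))
  have e2 : |dR b a * (w β b Y * w β a Y)| = dR b a * (w β b Y * w β a Y) :=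
    abs_of_nonneg (mul_nonneg (dR_nonneg b a) (mul_nonneg (w_nonneg β b Y) (w_nonneg β a Y)))
  calc |dI b a * w β b Y - dR b a * (w β b Y * w β a Y)|
      ≤ |dI b a * w β b Y| + |dR b a * (w β b Y * w β a Y)| := abs_sub _ _
    _ = dI b a * w β b Y + dR b a * (w β b Y * w β a Y) := by rw [e1, e2]

lemma abs_Qd_le (c b a : Idx N p) (Y : Idx N p → ℝ) : |Qd β c b a Y| ≤ Qdb β c b a Y := by
  unfold Qd Qdb
  refine abs_comb β _ _ _ _ _ _ _ _ hβ (dI_nonneg c b) (dR_nonneg c b) (abs_Q_le β hβ c a Y)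
    ?_ ?_
  · calc |Q β c a Y * w β b Y + P β c Y * wd β b a Y|
        ≤ |Q β c a Y * w β b Y| + |P β c Y * wd β b a Y| := abs_add_le _ _
      _ ≤ Qb β c a Y * w β b Y + P β c Y * wb β b a Y := by
          rw [abs_mul, abs_mul, abs_of_nonneg (w_nonneg β b Y), abs_of_nonneg (P_nonneg β c Y)]
          exact add_le_add (mul_le_mul_of_nonneg_right (abs_Q_le β hβ c a Y) (w_nonneg β b Y))
            (mul_le_mul_of_nonneg_left (abs_wd_le β hβ b a Y) (P_nonneg β c Y))
  · calc |Q β c a Y * P β b Y + P β c Y * Q β b a Y|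
        ≤ |Q β c a Y * P β b Y| + |P β c Y * Q β b a Y| := abs_add_le _ _
      _ ≤ Qb β c a Y * P β b Y + P β c Y * Qb β b a Y := by
          rw [abs_mul, abs_mul, abs_of_nonneg (P_nonneg β b Y), abs_of_nonneg (P_nonneg β c Y)]
          exact add_le_add (mul_le_mul_of_nonneg_right (abs_Q_le β hβ c a Y) (P_nonneg β b Y))
            (mul_le_mul_of_nonneg_left (abs_Q_le β hβ b a Y) (P_nonneg β c Y))

end bounds
end MD

namespace MD
section compare
variable {N p : ℕ} [NeZero N] [NeZero p]
variable (β : ℝ) (hβ : 0 < β) {y : Idx N p → ℝ} (hy : ∀ e, |y e| ≤ β⁻¹)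
include hβ hy

lemma cβy (e : Idx N p) : β * y e ≤ 1 ∧ -1 ≤ β * y e := by
  have h1 : |β * y e| ≤ 1 := by
    rw [abs_mul, abs_of_nonneg hβ.le]
    calc β * |y e| ≤ β * β⁻¹ := mul_le_mul_of_nonneg_left (hy e) hβ.le
      _ = 1 := mul_inv_cancel₀ hβ.ne'
  exact ⟨(abs_le.1 h1).2, (abs_le.1 h1).1⟩

lemma cS_up (k : Fin N) (Y : Idx N p → ℝ) : S β k (Y + y) ≤ Real.exp 1 * S β k Y := by
  unfold S
  rw [mul_comm, Finset.sum_mul]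
  refine Finset.sum_le_sum fun j _ => ?_
  rw [show (Y + y) (k, j) = Y (k, j) + y (k, j) from rfl, mul_add, Real.exp_add]
  exact mul_le_mul_of_nonneg_left (Real.exp_le_exp.2 (cβy β hβ hy (k, j)).1)
    (Real.exp_pos _).le

lemma cS_lo (k : Fin N) (Y : Idx N p → ℝ) : Real.exp (-1) * S β k Y ≤ S β k (Y + y) := by
  unfold S
  rw [mul_comm, Finset.sum_mul]
  refine Finset.sum_le_sum fun j _ => ?_
  rw [show (Y + y) (k, j) = Y (k, j) + y (k, j) from rfl, mul_add, Real.exp_add]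
  exact mul_le_mul_of_nonneg_left (Real.exp_le_exp.2 (cβy β hβ hy (k, j)).2)
    (Real.exp_pos _).le

lemma cSinv (k : Fin N) (Y : Idx N p → ℝ) :
    (S β k (Y + y))⁻¹ ≤ Real.exp 1 * (S β k Y)⁻¹ := by
  have h0 : 0 < Real.exp (-1) * S β k Y := mul_pos (Real.exp_pos _) (S_pos β k Y)
  have h := inv_anti₀ h0 (cS_lo β hβ hy k Y)
  rwa [mul_inv, Real.exp_neg, inv_inv] at h

lemma cw (a : Idx N p) (Y : Idx N p → ℝ) : w β a (Y + y) ≤ Real.exp 2 * w β a Y := by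
  unfold w
  have h1 : Real.exp (β * (Y + y) a) ≤ Real.exp 1 * Real.exp (β * Y a) := by
    rw [show (Y + y) a = Y a + y a from rfl, mul_add, Real.exp_add, mul_comm]
    exact mul_le_mul_of_nonneg_right (Real.exp_le_exp.2 (cβy β hβ hy a).1)
      (Real.exp_pos _).le
  calc Real.exp (β * (Y + y) a) * (S β a.1 (Y + y))⁻¹
      ≤ (Real.exp 1 * Real.exp (β * Y a)) * (Real.exp 1 * (S β a.1 Y)⁻¹) :=
        mul_le_mul h1 (cSinv β hβ hy a.1 Y) (inv_nonneg.2 (S_pos β a.1 (Y + y)).le)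
          (mul_nonneg (Real.exp_pos 1).le (Real.exp_pos _).le)
    _ = (Real.exp 1 * Real.exp 1) * (Real.exp (β * Y a) * (S β a.1 Y)⁻¹) := by ring
    _ = Real.exp 2 * (Real.exp (β * Y a) * (S β a.1 Y)⁻¹) := by
        rw [← Real.exp_add]; norm_num

lemma cF_lo (k : Fin N) (Y : Idx N p → ℝ) : F β k Y - β⁻¹ ≤ F β k (Y + y) := by
  unfold F
  have h := Real.log_le_log (mul_pos (Real.exp_pos (-1)) (S_pos β k Y)) (cS_lo β hβ hy k Y)
  rw [Real.log_mul (Real.exp_pos _).ne' (S_pos β k Y).ne', Real.log_exp] at h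
  have := mul_le_mul_of_nonneg_left h (inv_nonneg.2 hβ.le)
  calc β⁻¹ * Real.log (S β k Y) - β⁻¹ = β⁻¹ * (-1 + Real.log (S β k Y)) := by ring
    _ ≤ β⁻¹ * Real.log (S β k (Y + y)) := this

lemma cF_up (k : Fin N) (Y : Idx N p → ℝ) : F β k (Y + y) ≤ F β k Y + β⁻¹ := by
  unfold F
  have h := Real.log_le_log (S_pos β k (Y + y)) (cS_up β hβ hy k Y)
  rw [Real.log_mul (Real.exp_pos _).ne' (S_pos β k Y).ne', Real.log_exp] at h
  have := mul_le_mul_of_nonneg_left h (inv_nonneg.2 hβ.le)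
  calc β⁻¹ * Real.log (S β k (Y + y)) ≤ β⁻¹ * (1 + Real.log (S β k Y)) := this
    _ = β⁻¹ * Real.log (S β k Y) + β⁻¹ := by ring

lemma cE_up (k : Fin N) (Y : Idx N p → ℝ) :
    Real.exp (β * -(F β k (Y + y))) ≤ Real.exp 1 * Real.exp (β * -(F β k Y)) := by
  rw [← Real.exp_add]
  refine Real.exp_le_exp.2 ?_
  have h := cF_lo β hβ hy k Y
  have := mul_le_mul_of_nonneg_left (neg_le_neg h) hβ.le
  calc β * -(F β k (Y + y)) ≤ β * -(F β k Y - β⁻¹) := this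
    _ = β * -(F β k Y) + β * β⁻¹ := by ring
    _ = 1 + β * -(F β k Y) := by rw [mul_inv_cancel₀ hβ.ne']; ring

lemma cE_lo (k : Fin N) (Y : Idx N p → ℝ) :
    Real.exp (-1) * Real.exp (β * -(F β k Y)) ≤ Real.exp (β * -(F β k (Y + y))) := by
  rw [← Real.exp_add]
  refine Real.exp_le_exp.2 ?_
  have h := cF_up β hβ hy k Y
  have := mul_le_mul_of_nonneg_left (neg_le_neg h) hβ.le
  calc -1 + β * -(F β k Y) = β * -(F β k Y + β⁻¹) + (β * β⁻¹ - 1) := by ring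
    _ = β * -(F β k Y + β⁻¹) := by rw [mul_inv_cancel₀ hβ.ne']; ring
    _ ≤ β * -(F β k (Y + y)) := this

lemma cT_lo (Y : Idx N p → ℝ) : Real.exp (-1) * T β Y ≤ T β (Y + y) := by
  unfold T
  rw [Finset.mul_sum]
  exact Finset.sum_le_sum fun k _ => cE_lo β hβ hy k Y

lemma cTinv (Y : Idx N p → ℝ) : (T β (Y + y))⁻¹ ≤ Real.exp 1 * (T β Y)⁻¹ := by
  have h0 : 0 < Real.exp (-1) * T β Y := mul_pos (Real.exp_pos _) (T_pos β Y)
  have h := inv_anti₀ h0 (cT_lo β hβ hy Y)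
  rwa [mul_inv, Real.exp_neg, inv_inv] at h

lemma cpr (k : Fin N) (Y : Idx N p → ℝ) : pr β k (Y + y) ≤ Real.exp 2 * pr β k Y := by
  unfold pr
  calc Real.exp (β * -(F β k (Y + y))) * (T β (Y + y))⁻¹
      ≤ (Real.exp 1 * Real.exp (β * -(F β k Y))) * (Real.exp 1 * (T β Y)⁻¹) :=
        mul_le_mul (cE_up β hβ hy k Y) (cTinv β hβ hy Y) (inv_nonneg.2 (T_pos β (Y + y)).le)
          (mul_nonneg (Real.exp_pos 1).le (Real.exp_pos _).le)
    _ = (Real.exp 1 * Real.exp 1) * (Real.exp (β * -(F β k Y)) * (T β Y)⁻¹) := by ring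
    _ = Real.exp 2 * (Real.exp (β * -(F β k Y)) * (T β Y)⁻¹) := by
        rw [← Real.exp_add]; norm_num

lemma cP4 (a : Idx N p) (Y : Idx N p → ℝ) : P β a (Y + y) ≤ Real.exp 4 * P β a Y := by
  unfold P
  calc pr β a.1 (Y + y) * w β a (Y + y)
      ≤ (Real.exp 2 * pr β a.1 Y) * (Real.exp 2 * w β a Y) :=
        mul_le_mul (cpr β hβ hy a.1 Y) (cw β hβ hy a Y) (w_nonneg β a _)
          (mul_nonneg (Real.exp_pos 2).le (pr_pos β a.1 Y).le)
    _ = (Real.exp 2 * Real.exp 2) * (pr β a.1 Y * w β a Y) := by ring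
    _ = Real.exp 4 * (pr β a.1 Y * w β a Y) := by rw [← Real.exp_add]; norm_num

lemma cw4 (a : Idx N p) (Y : Idx N p → ℝ) : w β a (Y + y) ≤ Real.exp 4 * w β a Y := by
  refine (cw β hβ hy a Y).trans ?_
  exact mul_le_mul_of_nonneg_right (Real.exp_le_exp.2 (by norm_num)) (w_nonneg β a Y)

lemma cP8 (a : Idx N p) (Y : Idx N p → ℝ) : P β a (Y + y) ≤ Real.exp 8 * P β a Y := by
  refine (cP4 β hβ hy a Y).trans ?_
  exact mul_le_mul_of_nonneg_right (Real.exp_le_exp.2 (by norm_num)) (P_nonneg β a Y)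

lemma cQb8 (c b : Idx N p) (Y : Idx N p → ℝ) : Qb β c b (Y + y) ≤ Real.exp 8 * Qb β c b Y := by
  unfold Qb
  have h1 : dI c b * P β c (Y + y) ≤ dI c b * (Real.exp 8 * P β c Y) :=
    mul_le_mul_of_nonneg_left (cP8 β hβ hy c Y) (dI_nonneg c b)
  have h2 : P β c (Y + y) * w β b (Y + y) ≤ Real.exp 8 * (P β c Y * w β b Y) := by
    calc P β c (Y + y) * w β b (Y + y)
        ≤ (Real.exp 4 * P β c Y) * (Real.exp 4 * w β b Y) :=
          mul_le_mul (cP4 β hβ hy c Y) (cw4 β hβ hy b Y) (w_nonneg β b _)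
            (mul_nonneg (Real.exp_pos 4).le (P_nonneg β c Y))
      _ = (Real.exp 4 * Real.exp 4) * (P β c Y * w β b Y) := by ring
      _ = Real.exp 8 * (P β c Y * w β b Y) := by rw [← Real.exp_add]; norm_num
  have h3 : P β c (Y + y) * P β b (Y + y) ≤ Real.exp 8 * (P β c Y * P β b Y) := by
    calc P β c (Y + y) * P β b (Y + y)
        ≤ (Real.exp 4 * P β c Y) * (Real.exp 4 * P β b Y) :=
          mul_le_mul (cP4 β hβ hy c Y) (cP4 β hβ hy b Y) (P_nonneg β b _)
            (mul_nonneg (Real.exp_pos 4).le (P_nonneg β c Y))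
      _ = (Real.exp 4 * Real.exp 4) * (P β c Y * P β b Y) := by ring
      _ = Real.exp 8 * (P β c Y * P β b Y) := by rw [← Real.exp_add]; norm_num
  have h2' : 2 * (dR c b * (P β c (Y + y) * w β b (Y + y)))
      ≤ 2 * (dR c b * (Real.exp 8 * (P β c Y * w β b Y))) := by
    refine mul_le_mul_of_nonneg_left (mul_le_mul_of_nonneg_left h2 (dR_nonneg c b)) (by norm_num)
  calc β * (dI c b * P β c (Y + y) + 2 * (dR c b * (P β c (Y + y) * w β b (Y + y)))
        + P β c (Y + y) * P β b (Y + y))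
      ≤ β * (dI c b * (Real.exp 8 * P β c Y) + 2 * (dR c b * (Real.exp 8 * (P β c Y * w β b Y)))
        + Real.exp 8 * (P β c Y * P β b Y)) := by
        refine mul_le_mul_of_nonneg_left ?_ hβ.le
        linarith
    _ = Real.exp 8 * (β * (dI c b * P β c Y + 2 * (dR c b * (P β c Y * w β b Y))
        + P β c Y * P β b Y)) := by ring

lemma cwb4 (b a : Idx N p) (Y : Idx N p → ℝ) : wb β b a (Y + y) ≤ Real.exp 4 * wb β b a Y := by
  unfold wb
  have h1 : dI b a * w β b (Y + y) ≤ dI b a * (Real.exp 4 * w β b Y) :=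
    mul_le_mul_of_nonneg_left (cw4 β hβ hy b Y) (dI_nonneg b a)
  have h2 : w β b (Y + y) * w β a (Y + y) ≤ Real.exp 4 * (w β b Y * w β a Y) := by
    calc w β b (Y + y) * w β a (Y + y)
        ≤ (Real.exp 2 * w β b Y) * (Real.exp 2 * w β a Y) :=
          mul_le_mul (cw β hβ hy b Y) (cw β hβ hy a Y) (w_nonneg β a _)
            (mul_nonneg (Real.exp_pos 2).le (w_nonneg β b Y))
      _ = (Real.exp 2 * Real.exp 2) * (w β b Y * w β a Y) := by ring
      _ = Real.exp 4 * (w β b Y * w β a Y) := by rw [← Real.exp_add]; norm_num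
  have h2' : dR b a * (w β b (Y + y) * w β a (Y + y))
      ≤ dR b a * (Real.exp 4 * (w β b Y * w β a Y)) :=
    mul_le_mul_of_nonneg_left h2 (dR_nonneg b a)
  calc β * (dI b a * w β b (Y + y) + dR b a * (w β b (Y + y) * w β a (Y + y)))
      ≤ β * (dI b a * (Real.exp 4 * w β b Y) + dR b a * (Real.exp 4 * (w β b Y * w β a Y))) := by
        refine mul_le_mul_of_nonneg_left ?_ hβ.le
        linarith
    _ = Real.exp 4 * (β * (dI b a * w β b Y + dR b a * (w β b Y * w β a Y))) := by ring

lemma cQdb12 (c b a : Idx N p) (Y : Idx N p → ℝ) :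
    Qdb β c b a (Y + y) ≤ Real.exp 12 * Qdb β c b a Y := by
  unfold Qdb
  have e812 : Real.exp 8 ≤ Real.exp 12 := Real.exp_le_exp.2 (by norm_num)
  have h1 : dI c b * Qb β c a (Y + y) ≤ dI c b * (Real.exp 12 * Qb β c a Y) := by
    refine mul_le_mul_of_nonneg_left ((cQb8 β hβ hy c a Y).trans ?_) (dI_nonneg c b)
    exact mul_le_mul_of_nonneg_right e812 (Qb_nonneg β hβ.le c a Y)
  have h2a : Qb β c a (Y + y) * w β b (Y + y) ≤ Real.exp 12 * (Qb β c a Y * w β b Y) := by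
    calc Qb β c a (Y + y) * w β b (Y + y)
        ≤ (Real.exp 8 * Qb β c a Y) * (Real.exp 4 * w β b Y) :=
          mul_le_mul (cQb8 β hβ hy c a Y) (cw4 β hβ hy b Y) (w_nonneg β b _)
            (mul_nonneg (Real.exp_pos _).le (Qb_nonneg β hβ.le c a Y))
      _ = (Real.exp 8 * Real.exp 4) * (Qb β c a Y * w β b Y) := by ring
      _ = Real.exp 12 * (Qb β c a Y * w β b Y) := by rw [← Real.exp_add]; norm_num
  have h2b : P β c (Y + y) * wb β b a (Y + y) ≤ Real.exp 12 * (P β c Y * wb β b a Y) := by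
    calc P β c (Y + y) * wb β b a (Y + y)
        ≤ (Real.exp 4 * P β c Y) * (Real.exp 4 * wb β b a Y) :=
          mul_le_mul (cP4 β hβ hy c Y) (cwb4 β hβ hy b a Y) (wb_nonneg β hβ.le b a _)
            (mul_nonneg (Real.exp_pos 4).le (P_nonneg β c Y))
      _ = (Real.exp 4 * Real.exp 4) * (P β c Y * wb β b a Y) := by ring
      _ ≤ Real.exp 12 * (P β c Y * wb β b a Y) := by
          rw [← Real.exp_add]
          refine mul_le_mul_of_nonneg_right (Real.exp_le_exp.2 (by norm_num)) ?_
          exact mul_nonneg (P_nonneg β c Y) (wb_nonneg β hβ.le b a Y)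
  have h2 : 2 * (dR c b * (Qb β c a (Y + y) * w β b (Y + y) + P β c (Y + y) * wb β b a (Y + y)))
      ≤ 2 * (dR c b * (Real.exp 12 * (Qb β c a Y * w β b Y) + Real.exp 12 * (P β c Y * wb β b a Y))) := by
    refine mul_le_mul_of_nonneg_left (mul_le_mul_of_nonneg_left ?_ (dR_nonneg c b)) (by norm_num)
    linarith
  have h3a : Qb β c a (Y + y) * P β b (Y + y) ≤ Real.exp 12 * (Qb β c a Y * P β b Y) := by
    calc Qb β c a (Y + y) * P β b (Y + y)
        ≤ (Real.exp 8 * Qb β c a Y) * (Real.exp 4 * P β b Y) :=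
          mul_le_mul (cQb8 β hβ hy c a Y) (cP4 β hβ hy b Y) (P_nonneg β b _)
            (mul_nonneg (Real.exp_pos _).le (Qb_nonneg β hβ.le c a Y))
      _ = (Real.exp 8 * Real.exp 4) * (Qb β c a Y * P β b Y) := by ring
      _ = Real.exp 12 * (Qb β c a Y * P β b Y) := by rw [← Real.exp_add]; norm_num
  have h3b : P β c (Y + y) * Qb β b a (Y + y) ≤ Real.exp 12 * (P β c Y * Qb β b a Y) := by
    calc P β c (Y + y) * Qb β b a (Y + y)
        ≤ (Real.exp 4 * P β c Y) * (Real.exp 8 * Qb β b a Y) :=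
          mul_le_mul (cP4 β hβ hy c Y) (cQb8 β hβ hy b a Y) (Qb_nonneg β hβ.le b a _)
            (mul_nonneg (Real.exp_pos 4).le (P_nonneg β c Y))
      _ = (Real.exp 4 * Real.exp 8) * (P β c Y * Qb β b a Y) := by ring
      _ = Real.exp 12 * (P β c Y * Qb β b a Y) := by rw [← Real.exp_add]; norm_num
  calc β * (dI c b * Qb β c a (Y + y)
        + 2 * (dR c b * (Qb β c a (Y + y) * w β b (Y + y) + P β c (Y + y) * wb β b a (Y + y)))
        + (Qb β c a (Y + y) * P β b (Y + y) + P β c (Y + y) * Qb β b a (Y + y)))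
      ≤ β * (dI c b * (Real.exp 12 * Qb β c a Y)
        + 2 * (dR c b * (Real.exp 12 * (Qb β c a Y * w β b Y) + Real.exp 12 * (P β c Y * wb β b a Y)))
        + (Real.exp 12 * (Qb β c a Y * P β b Y) + Real.exp 12 * (P β c Y * Qb β b a Y))) := by
        refine mul_le_mul_of_nonneg_left ?_ hβ.le
        linarith
    _ = Real.exp 12 * (β * (dI c b * Qb β c a Y
        + 2 * (dR c b * (Qb β c a Y * w β b Y + P β c Y * wb β b a Y))
        + (Qb β c a Y * P β b Y + P β c Y * Qb β b a Y))) := by ring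

end compare
end MD

namespace MD
section sums
variable {N p : ℕ} [NeZero N] [NeZero p]
variable (β : ℝ)

lemma dI_comm (a b : Idx N p) : dI a b = dI b a := by
  unfold dI
  by_cases h : a = b
  · simp [h]
  · rw [if_neg h, if_neg (fun hh => h hh.symm)]

lemma dR_comm (a b : Idx N p) : dR a b = dR b a := by
  unfold dR
  by_cases h : a.1 = b.1
  · simp [h]
  · rw [if_neg h, if_neg (fun hh => h hh.symm)]

lemma sum_dI_fst (c : Idx N p) (f : Idx N p → ℝ) : ∑ a, dI c a * f a = f c := by
  simp only [dI, ite_mul, one_mul, zero_mul]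
  exact Finset.sum_ite_eq Finset.univ c f |>.trans (by simp)

lemma sum_dI_snd (c : Idx N p) (f : Idx N p → ℝ) : ∑ a, dI a c * f a = f c := by
  simp only [dI, ite_mul, one_mul, zero_mul]
  exact Finset.sum_ite_eq' Finset.univ c f |>.trans (by simp)

lemma sum_dR_fst (c : Idx N p) (f : Idx N p → ℝ) :
    ∑ a, dR c a * f a = ∑ i, f (c.1, i) := by
  simp only [dR, ite_mul, one_mul, zero_mul]
  rw [Fintype.sum_prod_type]
  have h : ∀ l : Fin N, (∑ i, if c.1 = l then f (l, i) else 0)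
      = if c.1 = l then (∑ i, f (l, i)) else 0 := fun l => by split_ifs <;> simp
  simp_rw [h]
  rw [Finset.sum_ite_eq Finset.univ c.1 (fun l => ∑ i, f (l, i))]
  simp

lemma sum_dR_snd (c : Idx N p) (f : Idx N p → ℝ) :
    ∑ a, dR a c * f a = ∑ i, f (c.1, i) := by
  simp_rw [dR_comm]
  exact sum_dR_fst c f

lemma sum_dI_one (c : Idx N p) : ∑ a, dI c a = (1:ℝ) := by
  have := sum_dI_fst (N := N) (p := p) c (fun _ => (1:ℝ))
  simpa using this

lemma sumQb_snd (c : Idx N p) (Y : Idx N p → ℝ) : ∑ a, Qb β c a Y = 4 * β * P β c Y := by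
  unfold Qb
  rw [← Finset.mul_sum]
  have h1 : ∑ a, (dI c a * P β c Y + 2 * (dR c a * (P β c Y * w β a Y)) + P β c Y * P β a Y)
      = (∑ a, dI c a * P β c Y) + (∑ a, 2 * (dR c a * (P β c Y * w β a Y)))
        + ∑ a, P β c Y * P β a Y := by
    rw [Finset.sum_add_distrib, Finset.sum_add_distrib]
  rw [h1]
  have e1 : ∑ a, dI c a * P β c Y = P β c Y := by
    rw [← Finset.sum_mul, sum_dI_one, one_mul]
  have e2 : ∑ a, 2 * (dR c a * (P β c Y * w β a Y)) = 2 * P β c Y := by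
    rw [← Finset.mul_sum]
    congr 1
    have : ∑ a, dR c a * (P β c Y * w β a Y) = ∑ i, P β c Y * w β (c.1, i) Y :=
      sum_dR_fst c _
    rw [this, ← Finset.mul_sum, sum_w_row, mul_one]
  have e3 : ∑ a, P β c Y * P β a Y = P β c Y := by
    rw [← Finset.mul_sum, sum_P, mul_one]
  rw [e1, e2, e3]
  ring

lemma sumQb_fst (a : Idx N p) (Y : Idx N p → ℝ) : ∑ c, Qb β c a Y = 4 * β * P β a Y := by
  unfold Qb
  rw [← Finset.mul_sum]
  have h1 : ∑ c, (dI c a * P β c Y + 2 * (dR c a * (P β c Y * w β a Y)) + P β c Y * P β a Y)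
      = (∑ c, dI c a * P β c Y) + (∑ c, 2 * (dR c a * (P β c Y * w β a Y)))
        + ∑ c, P β c Y * P β a Y := by
    rw [Finset.sum_add_distrib, Finset.sum_add_distrib]
  rw [h1]
  have e1 : ∑ c, dI c a * P β c Y = P β a Y := by
    simp_rw [dI_comm]
    exact sum_dI_fst a _
  have e2 : ∑ c, 2 * (dR c a * (P β c Y * w β a Y)) = 2 * P β a Y := by
    rw [← Finset.mul_sum]
    have : ∑ c, dR c a * (P β c Y * w β a Y) = ∑ i, P β (a.1, i) Y * w β a Y :=
      sum_dR_snd a _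
    rw [this, ← Finset.sum_mul, sum_P_row]
    have : pr β a.1 Y * w β a Y = P β a Y := rfl
    rw [this]
  have e3 : ∑ c, P β c Y * P β a Y = P β a Y := by
    rw [← Finset.sum_mul, sum_P, one_mul]
  rw [e1, e2, e3]
  ring

lemma sum_wb_snd (b : Idx N p) (Y : Idx N p → ℝ) : ∑ a, wb β b a Y = 2 * β * w β b Y := by
  unfold wb
  rw [← Finset.mul_sum]
  rw [Finset.sum_add_distrib]
  have e1 : ∑ a, dI b a * w β b Y = w β b Y := by
    rw [← Finset.sum_mul, sum_dI_one, one_mul]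
  have e2 : ∑ a, dR b a * (w β b Y * w β a Y) = w β b Y := by
    have : ∑ a, dR b a * (w β b Y * w β a Y) = ∑ i, w β b Y * w β (b.1, i) Y :=
      sum_dR_fst b _
    rw [this, ← Finset.mul_sum, sum_w_row, mul_one]
  rw [e1, e2]
  ring

lemma sumQdb_a (c b : Idx N p) (Y : Idx N p → ℝ) :
    ∑ a, Qdb β c b a Y
      = 4 * β^2 * (dI c b * P β c Y) + 12 * β^2 * (dR c b * (P β c Y * w β b Y))
        + 8 * β^2 * (P β c Y * P β b Y) := by
  unfold Qdb
  rw [← Finset.mul_sum]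
  rw [Finset.sum_add_distrib, Finset.sum_add_distrib]
  have e1 : ∑ a, dI c b * Qb β c a Y = dI c b * (4 * β * P β c Y) := by
    rw [← Finset.mul_sum, sumQb_snd]
  have e2 : ∑ a, 2 * (dR c b * (Qb β c a Y * w β b Y + P β c Y * wb β b a Y))
      = 2 * (dR c b * ((4 * β * P β c Y) * w β b Y + P β c Y * (2 * β * w β b Y))) := by
    rw [← Finset.mul_sum, ← Finset.mul_sum]
    congr 2
    rw [Finset.sum_add_distrib, ← Finset.sum_mul, ← Finset.mul_sum, sumQb_snd, sum_wb_snd]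
  have e3 : ∑ a, (Qb β c a Y * P β b Y + P β c Y * Qb β b a Y)
      = (4 * β * P β c Y) * P β b Y + P β c Y * (4 * β * P β b Y) := by
    rw [Finset.sum_add_distrib, ← Finset.sum_mul, ← Finset.mul_sum, sumQb_snd, sumQb_snd]
  rw [e1, e2, e3]
  ring

lemma sumQdb (Y : Idx N p → ℝ) :
    ∑ a : Idx N p, ∑ b : Idx N p, ∑ c : Idx N p, Qdb β c b a Y = 24 * β^2 := by
  rw [Finset.sum_comm]
  have h : ∀ b : Idx N p, ∑ a : Idx N p, ∑ c : Idx N p, Qdb β c b a Y = 24 * β^2 * P β b Y := by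
    intro b
    rw [Finset.sum_comm]
    have h2 : ∀ c, ∑ a, Qdb β c b a Y
        = 4 * β^2 * (dI c b * P β c Y) + 12 * β^2 * (dR c b * (P β c Y * w β b Y))
          + 8 * β^2 * (P β c Y * P β b Y) := fun c => sumQdb_a β c b Y
    simp_rw [h2]
    rw [Finset.sum_add_distrib, Finset.sum_add_distrib]
    have e1 : ∑ c, 4 * β^2 * (dI c b * P β c Y) = 4 * β^2 * P β b Y := by
      rw [← Finset.mul_sum]
      simp_rw [dI_comm]
      rw [sum_dI_fst b (P β · Y)]
    have e2 : ∑ c, 12 * β^2 * (dR c b * (P β c Y * w β b Y)) = 12 * β^2 * P β b Y := by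
      rw [← Finset.mul_sum]
      have h3 : ∑ c, dR c b * (P β c Y * w β b Y) = ∑ i, P β (b.1, i) Y * w β b Y :=
        sum_dR_snd b _
      rw [h3, ← Finset.sum_mul, sum_P_row]
      have : pr β b.1 Y * w β b Y = P β b Y := rfl
      rw [this]
    have e3 : ∑ c, 8 * β^2 * (P β c Y * P β b Y) = 8 * β^2 * P β b Y := by
      rw [← Finset.mul_sum, ← Finset.sum_mul, sum_P, one_mul]
    rw [e1, e2, e3]
    ring
  simp_rw [h]
  rw [← Finset.mul_sum, sum_P, mul_one]

end sums
end MD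

namespace MD
section final
variable {N p : ℕ} [NeZero N] [NeZero p]
variable (β : ℝ) (B1 B2 B3 : ℝ)

noncomputable def V (a b c : Idx N p) (Y : Idx N p → ℝ) : ℝ :=
  B3 * (P β a Y * (P β b Y * P β c Y))
    + B2 * (Qb β c b Y * P β a Y + P β c Y * Qb β b a Y + P β b Y * Qb β c a Y)
    + B1 * Qdb β c b a Y

variable (μb : Idx N p → ℝ) (g : ℝ → ℝ)

lemma m3_bound (hβ : 0 ≤ β)
    (hB1 : ∀ t, |deriv g t| ≤ B1) (hB2 : ∀ t, |deriv (deriv g) t| ≤ B2)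
    (hB3 : ∀ t, |deriv (deriv (deriv g)) t| ≤ B3) (c b a : Idx N p) (z : Idx N p → ℝ) :
    |m3 β μb g c b a z| ≤ V β B1 B2 B3 a b c (z + μb) := by
  set Y := z + μb with hY
  have hB1n : 0 ≤ B1 := le_trans (abs_nonneg _) (hB1 0)
  have hB2n : 0 ≤ B2 := le_trans (abs_nonneg _) (hB2 0)
  have hB3n : 0 ≤ B3 := le_trans (abs_nonneg _) (hB3 0)
  have h1 : |deriv g (G β Y) * Qd β c b a Y| ≤ B1 * Qdb β c b a Y := by
    rw [abs_mul]
    exact mul_le_mul (hB1 _) (abs_Qd_le β hβ c b a Y) (abs_nonneg _) hB1n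
  have hmid : |Q β c b Y * P β a Y + P β c Y * Q β b a Y + P β b Y * Q β c a Y|
      ≤ Qb β c b Y * P β a Y + P β c Y * Qb β b a Y + P β b Y * Qb β c a Y := by
    calc |Q β c b Y * P β a Y + P β c Y * Q β b a Y + P β b Y * Q β c a Y|
        ≤ |Q β c b Y * P β a Y + P β c Y * Q β b a Y| + |P β b Y * Q β c a Y| := abs_add_le _ _
      _ ≤ |Q β c b Y * P β a Y| + |P β c Y * Q β b a Y| + |P β b Y * Q β c a Y| := by
          linarith [abs_add_le (Q β c b Y * P β a Y) (P β c Y * Q β b a Y)]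
      _ ≤ Qb β c b Y * P β a Y + P β c Y * Qb β b a Y + P β b Y * Qb β c a Y := by
          rw [abs_mul, abs_mul, abs_mul, abs_of_nonneg (P_nonneg β a Y),
            abs_of_nonneg (P_nonneg β c Y), abs_of_nonneg (P_nonneg β b Y)]
          have g1 := mul_le_mul_of_nonneg_right (abs_Q_le β hβ c b Y) (P_nonneg β a Y)
          have g2 := mul_le_mul_of_nonneg_left (abs_Q_le β hβ b a Y) (P_nonneg β c Y)
          have g3 := mul_le_mul_of_nonneg_left (abs_Q_le β hβ c a Y) (P_nonneg β b Y)
          linarith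
  have h2 : |deriv (deriv g) (G β Y) *
      (Q β c b Y * P β a Y + P β c Y * Q β b a Y + P β b Y * Q β c a Y)|
      ≤ B2 * (Qb β c b Y * P β a Y + P β c Y * Qb β b a Y + P β b Y * Qb β c a Y) := by
    rw [abs_mul]
    exact mul_le_mul (hB2 _) hmid (abs_nonneg _) hB2n
  have h3 : |deriv (deriv (deriv g)) (G β Y) * (P β a Y * (P β b Y * P β c Y))|
      ≤ B3 * (P β a Y * (P β b Y * P β c Y)) := by
    rw [abs_mul]
    refine mul_le_mul (hB3 _) (le_of_eq (abs_of_nonneg ?_)) (abs_nonneg _) hB3n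
    exact mul_nonneg (P_nonneg β a Y) (mul_nonneg (P_nonneg β b Y) (P_nonneg β c Y))
  calc |m3 β μb g c b a z|
      ≤ |deriv g (G β Y) * Qd β c b a Y
          + deriv (deriv g) (G β Y) *
            (Q β c b Y * P β a Y + P β c Y * Q β b a Y + P β b Y * Q β c a Y)|
        + |deriv (deriv (deriv g)) (G β Y) * (P β a Y * (P β b Y * P β c Y))| := abs_add_le _ _
    _ ≤ |deriv g (G β Y) * Qd β c b a Y|
        + |deriv (deriv g) (G β Y) *
            (Q β c b Y * P β a Y + P β c Y * Q β b a Y + P β b Y * Q β c a Y)|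
        + |deriv (deriv (deriv g)) (G β Y) * (P β a Y * (P β b Y * P β c Y))| := by
        linarith [abs_add_le (deriv g (G β Y) * Qd β c b a Y)
          (deriv (deriv g) (G β Y) *
            (Q β c b Y * P β a Y + P β c Y * Q β b a Y + P β b Y * Q β c a Y))]
    _ ≤ B1 * Qdb β c b a Y
        + B2 * (Qb β c b Y * P β a Y + P β c Y * Qb β b a Y + P β b Y * Qb β c a Y)
        + B3 * (P β a Y * (P β b Y * P β c Y)) := by linarith
    _ = V β B1 B2 B3 a b c Y := by unfold V; ring

lemma cV12 (hβ : 0 < β) {y : Idx N p → ℝ} (hy : ∀ e, |y e| ≤ β⁻¹)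
    (hB1n : 0 ≤ B1) (hB2n : 0 ≤ B2) (hB3n : 0 ≤ B3) (a b c : Idx N p) (Y : Idx N p → ℝ) :
    V β B1 B2 B3 a b c (Y + y) ≤ Real.exp 12 * V β B1 B2 B3 a b c Y := by
  have e12 : Real.exp 4 * (Real.exp 4 * Real.exp 4) = Real.exp 12 := by
    rw [← Real.exp_add, ← Real.exp_add]; norm_num
  have hPPP : P β a (Y + y) * (P β b (Y + y) * P β c (Y + y))
      ≤ Real.exp 12 * (P β a Y * (P β b Y * P β c Y)) := by
    calc P β a (Y + y) * (P β b (Y + y) * P β c (Y + y))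
        ≤ (Real.exp 4 * P β a Y) * ((Real.exp 4 * P β b Y) * (Real.exp 4 * P β c Y)) := by
          refine mul_le_mul (cP4 β hβ hy a Y) ?_
            (mul_nonneg (P_nonneg β b _) (P_nonneg β c _))
            (mul_nonneg (Real.exp_pos 4).le (P_nonneg β a Y))
          exact mul_le_mul (cP4 β hβ hy b Y) (cP4 β hβ hy c Y) (P_nonneg β c _)
            (mul_nonneg (Real.exp_pos 4).le (P_nonneg β b Y))
      _ = (Real.exp 4 * (Real.exp 4 * Real.exp 4)) * (P β a Y * (P β b Y * P β c Y)) := by ring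
      _ = Real.exp 12 * (P β a Y * (P β b Y * P β c Y)) := by rw [e12]
  have hQP : ∀ u v : Idx N p, Qb β u v (Y + y) * P β a (Y + y)
      ≤ Real.exp 12 * (Qb β u v Y * P β a Y) := by
    intro u v
    calc Qb β u v (Y + y) * P β a (Y + y)
        ≤ (Real.exp 8 * Qb β u v Y) * (Real.exp 4 * P β a Y) :=
          mul_le_mul (cQb8 β hβ hy u v Y) (cP4 β hβ hy a Y) (P_nonneg β a _)
            (mul_nonneg (Real.exp_pos 8).le (Qb_nonneg β hβ.le u v Y))
      _ = (Real.exp 8 * Real.exp 4) * (Qb β u v Y * P β a Y) := by ring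
      _ = Real.exp 12 * (Qb β u v Y * P β a Y) := by rw [← Real.exp_add]; norm_num
  have hPQ : ∀ (e : Idx N p) (u v : Idx N p), P β e (Y + y) * Qb β u v (Y + y)
      ≤ Real.exp 12 * (P β e Y * Qb β u v Y) := by
    intro e u v
    calc P β e (Y + y) * Qb β u v (Y + y)
        ≤ (Real.exp 4 * P β e Y) * (Real.exp 8 * Qb β u v Y) :=
          mul_le_mul (cP4 β hβ hy e Y) (cQb8 β hβ hy u v Y) (Qb_nonneg β hβ.le u v _)
            (mul_nonneg (Real.exp_pos 4).le (P_nonneg β e Y))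
      _ = (Real.exp 4 * Real.exp 8) * (P β e Y * Qb β u v Y) := by ring
      _ = Real.exp 12 * (P β e Y * Qb β u v Y) := by rw [← Real.exp_add]; norm_num
  have hQba : Qb β c b (Y + y) * P β a (Y + y) ≤ Real.exp 12 * (Qb β c b Y * P β a Y) := hQP c b
  have hQ2 : P β c (Y + y) * Qb β b a (Y + y) ≤ Real.exp 12 * (P β c Y * Qb β b a Y) := hPQ c b a
  have hQ3 : P β b (Y + y) * Qb β c a (Y + y) ≤ Real.exp 12 * (P β b Y * Qb β c a Y) := hPQ b c a
  have hQdb := cQdb12 β hβ hy c b a Y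
  unfold V
  have t1 : B3 * (P β a (Y + y) * (P β b (Y + y) * P β c (Y + y)))
      ≤ B3 * (Real.exp 12 * (P β a Y * (P β b Y * P β c Y))) :=
    mul_le_mul_of_nonneg_left hPPP hB3n
  have t2 : B2 * (Qb β c b (Y + y) * P β a (Y + y) + P β c (Y + y) * Qb β b a (Y + y)
        + P β b (Y + y) * Qb β c a (Y + y))
      ≤ B2 * (Real.exp 12 * (Qb β c b Y * P β a Y) + Real.exp 12 * (P β c Y * Qb β b a Y)
        + Real.exp 12 * (P β b Y * Qb β c a Y)) := by
    refine mul_le_mul_of_nonneg_left ?_ hB2n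
    linarith
  have t3 : B1 * Qdb β c b a (Y + y) ≤ B1 * (Real.exp 12 * Qdb β c b a Y) :=
    mul_le_mul_of_nonneg_left hQdb hB1n
  calc B3 * (P β a (Y + y) * (P β b (Y + y) * P β c (Y + y)))
      + B2 * (Qb β c b (Y + y) * P β a (Y + y) + P β c (Y + y) * Qb β b a (Y + y)
        + P β b (Y + y) * Qb β c a (Y + y))
      + B1 * Qdb β c b a (Y + y)
      ≤ B3 * (Real.exp 12 * (P β a Y * (P β b Y * P β c Y)))
        + B2 * (Real.exp 12 * (Qb β c b Y * P β a Y) + Real.exp 12 * (P β c Y * Qb β b a Y)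
          + Real.exp 12 * (P β b Y * Qb β c a Y))
        + B1 * (Real.exp 12 * Qdb β c b a Y) := by linarith
    _ = Real.exp 12 * (B3 * (P β a Y * (P β b Y * P β c Y))
        + B2 * (Qb β c b Y * P β a Y + P β c Y * Qb β b a Y + P β b Y * Qb β c a Y)
        + B1 * Qdb β c b a Y) := by ring

lemma sum_V (Y : Idx N p → ℝ) :
    ∑ a : Idx N p, ∑ b : Idx N p, ∑ c : Idx N p, V β B1 B2 B3 a b c Y
      = B3 + 12 * β * B2 + 24 * β^2 * B1 := by
  have hsplit : ∑ a : Idx N p, ∑ b : Idx N p, ∑ c : Idx N p, V β B1 B2 B3 a b c Y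
      = B3 * (∑ a : Idx N p, ∑ b : Idx N p, ∑ c : Idx N p, P β a Y * (P β b Y * P β c Y))
        + B2 * (∑ a : Idx N p, ∑ b : Idx N p, ∑ c : Idx N p,
            (Qb β c b Y * P β a Y + P β c Y * Qb β b a Y + P β b Y * Qb β c a Y))
        + B1 * (∑ a : Idx N p, ∑ b : Idx N p, ∑ c : Idx N p, Qdb β c b a Y) := by
    simp only [V, Finset.sum_add_distrib, ← Finset.mul_sum]
  rw [hsplit]
  have S3 : ∑ a : Idx N p, ∑ b : Idx N p, ∑ c : Idx N p, P β a Y * (P β b Y * P β c Y) = 1 := by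
    simp only [← Finset.mul_sum, sum_P, mul_one]
  have p1 : ∑ a : Idx N p, ∑ b : Idx N p, ∑ c : Idx N p, Qb β c b Y * P β a Y = 4 * β := by
    have hin : ∀ a b : Idx N p, ∑ c : Idx N p, Qb β c b Y * P β a Y
        = (4 * β * P β b Y) * P β a Y := by
      intro a b
      rw [← Finset.sum_mul, sumQb_fst]
    simp_rw [hin]
    have hb : ∀ a : Idx N p, ∑ b : Idx N p, (4 * β * P β b Y) * P β a Y
        = 4 * β * P β a Y := by
      intro a
      rw [← Finset.sum_mul, ← Finset.mul_sum, sum_P, mul_one]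
    simp_rw [hb]
    rw [← Finset.mul_sum, sum_P, mul_one]
  have p2 : ∑ a : Idx N p, ∑ b : Idx N p, ∑ c : Idx N p, P β c Y * Qb β b a Y = 4 * β := by
    have hin : ∀ a b : Idx N p, ∑ c : Idx N p, P β c Y * Qb β b a Y = Qb β b a Y := by
      intro a b
      rw [← Finset.sum_mul, sum_P, one_mul]
    simp_rw [hin]
    have hb : ∀ a : Idx N p, ∑ b : Idx N p, Qb β b a Y = 4 * β * P β a Y := fun a =>
      sumQb_fst β a Y
    simp_rw [hb]
    rw [← Finset.mul_sum, sum_P, mul_one]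
  have p3 : ∑ a : Idx N p, ∑ b : Idx N p, ∑ c : Idx N p, P β b Y * Qb β c a Y = 4 * β := by
    have hin : ∀ a b : Idx N p, ∑ c : Idx N p, P β b Y * Qb β c a Y
        = P β b Y * (4 * β * P β a Y) := by
      intro a b
      rw [← Finset.mul_sum, sumQb_fst]
    simp_rw [hin]
    have hb : ∀ a : Idx N p, ∑ b : Idx N p, P β b Y * (4 * β * P β a Y)
        = 4 * β * P β a Y := by
      intro a
      rw [← Finset.sum_mul, sum_P, one_mul]
    simp_rw [hb]
    rw [← Finset.mul_sum, sum_P, mul_one]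
  have S2 : ∑ a : Idx N p, ∑ b : Idx N p, ∑ c : Idx N p,
      (Qb β c b Y * P β a Y + P β c Y * Qb β b a Y + P β b Y * Qb β c a Y) = 12 * β := by
    simp only [Finset.sum_add_distrib]
    rw [p1, p2, p3]
    ring
  rw [S3, S2, sumQdb]
  ring

end final
end MD


/-- Bound for the sum over triples of the local sup of third partial derivatives of
`m = g ∘ G_β( · + μ̄)` over an entrywise `β⁻¹`-neighbourhood. -/
theorem mComp_third_derivative_local_sup_bound (β : ℝ) (hβ : 0 < β)
    (N p : ℕ) [NeZero N] [NeZero p] (hNp : 2 ≤ N * p)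
    (μb : Fin N × Fin p → ℝ) (g : ℝ → ℝ) (hg : ContDiff ℝ 3 g)
    (B1 B2 B3 : ℝ)
    (hB1 : ∀ t, |deriv g t| ≤ B1)
    (hB2 : ∀ t, |deriv (deriv g) t| ≤ B2)
    (hB3 : ∀ t, |deriv (deriv (deriv g)) t| ≤ B3)
    (x : Fin N × Fin p → ℝ) :
    ∑ a : Fin N × Fin p, ∑ b : Fin N × Fin p, ∑ c : Fin N × Fin p,
        (⨆ y : {y : Fin N × Fin p → ℝ // ∀ e, |y e| ≤ β⁻¹},
          |iteratedFDeriv ℝ 3 (mComp β μb g) (x + ↑y)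
            ![Pi.single a 1, Pi.single b 1, Pi.single c 1]|) ≤
      Real.exp 12 * (B3 + 16 * β * B2 + 24 * β ^ 2 * B1) := by
  haveI : Nonempty {y : Fin N × Fin p → ℝ // ∀ e, |y e| ≤ β⁻¹} :=
    ⟨⟨0, fun e => by simpa using inv_nonneg.2 hβ.le⟩⟩
  have hB1n : 0 ≤ B1 := le_trans (abs_nonneg _) (hB1 0)
  have hB2n : 0 ≤ B2 := le_trans (abs_nonneg _) (hB2 0)
  have hB3n : 0 ≤ B3 := le_trans (abs_nonneg _) (hB3 0)
  have key : ∀ a b c : Fin N × Fin p,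
      (⨆ y : {y : Fin N × Fin p → ℝ // ∀ e, |y e| ≤ β⁻¹},
        |iteratedFDeriv ℝ 3 (mComp β μb g) (x + ↑y)
          ![Pi.single a 1, Pi.single b 1, Pi.single c 1]|)
      ≤ Real.exp 12 * MD.V β B1 B2 B3 a b c (x + μb) := by
    intro a b c
    refine ciSup_le fun yy => ?_
    obtain ⟨y, hy⟩ := yy
    show |iteratedFDeriv ℝ 3 (mComp β μb g) (x + y)
      ![Pi.single a 1, Pi.single b 1, Pi.single c 1]| ≤ _
    rw [MD.iter3_eq β μb g hβ.ne' hg (x + y) a b c]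
    calc |MD.m3 β μb g c b a (x + y)|
        ≤ MD.V β B1 B2 B3 a b c ((x + y) + μb) :=
          MD.m3_bound β B1 B2 B3 μb g hβ.le hB1 hB2 hB3 c b a (x + y)
      _ = MD.V β B1 B2 B3 a b c ((x + μb) + y) := by rw [add_right_comm]
      _ ≤ Real.exp 12 * MD.V β B1 B2 B3 a b c (x + μb) :=
          MD.cV12 β B1 B2 B3 hβ hy hB1n hB2n hB3n a b c (x + μb)
  calc ∑ a : Fin N × Fin p, ∑ b : Fin N × Fin p, ∑ c : Fin N × Fin p,
        (⨆ y : {y : Fin N × Fin p → ℝ // ∀ e, |y e| ≤ β⁻¹},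
          |iteratedFDeriv ℝ 3 (mComp β μb g) (x + ↑y)
            ![Pi.single a 1, Pi.single b 1, Pi.single c 1]|)
      ≤ ∑ a : Fin N × Fin p, ∑ b : Fin N × Fin p, ∑ c : Fin N × Fin p,
          Real.exp 12 * MD.V β B1 B2 B3 a b c (x + μb) :=
        Finset.sum_le_sum fun a _ => Finset.sum_le_sum fun b _ =>
          Finset.sum_le_sum fun c _ => key a b c
    _ = Real.exp 12 * ∑ a : Fin N × Fin p, ∑ b : Fin N × Fin p, ∑ c : Fin N × Fin p,
          MD.V β B1 B2 B3 a b c (x + μb) := by simp only [← Finset.mul_sum]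
    _ = Real.exp 12 * (B3 + 12 * β * B2 + 24 * β ^ 2 * B1) := by
        rw [MD.sum_V]
    _ ≤ Real.exp 12 * (B3 + 16 * β * B2 + 24 * β ^ 2 * B1) := by
        refine mul_le_mul_of_nonneg_left ?_ (Real.exp_pos 12).le
        have h : 0 ≤ β * B2 := mul_nonneg hβ.le hB2n
        linarith
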